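/- Let G be a connected simple graph on Fin 12 and k_s > 0. For all u, v : Fin 12 → ℝ³ with u 0 = 0, v 0 = 0 and u ≠ v, the strict convexity inequality J_s(v) > J_s(u) + (k_s/2) · Σ over ordered pairs (i,j) with i adjacent to j in G of ⟨u i − u j, (v i − v j) − (u i − u j)⟩ holds; that is, J_s(v) exceeds J_s(u) plus the Fréchet derivative of J_s at u applied to v − u. -/
import Mathlib


open scoped BigOperators RealInnerProductSpace

lemma exists_adj_ne {V : Type*} {G : SimpleGraph V} {α : Type*} (w : V → α)
    {x y : V} (p : G.Walk x y) (h : w x ≠ w y) :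
    ∃ a b, G.Adj a b ∧ w a ≠ w b := by
  induction p with
  | nil => exact absurd rfl h
  | @cons x z y hadj p ih =>
    by_cases hxz : w x = w z
    · exact ih (hxz ▸ h)
    · exact ⟨x, z, hadj, hxz⟩

/-- Strict convexity inequality for the stretching energy:
for a connected graph `G` on `Fin 12`, `k_s > 0`, and `u ≠ v` with
`u 0 = 0`, `v 0 = 0`, one has
`J_s(v) > J_s(u) + J_s'(u)(v − u)`. -/
theorem stretching_energy_strictly_convex (G : SimpleGraph (Fin 12))
    [DecidableRel G.Adj] (hG : G.Connected) (ks : ℝ) (hks : 0 < ks)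
    (u v : Fin 12 → EuclideanSpace ℝ (Fin 3))
    (hu0 : u 0 = 0) (hv0 : v 0 = 0) (huv : u ≠ v) :
    (ks / 4) * ∑ i : Fin 12, ∑ j : Fin 12,
        (if G.Adj i j then ‖v i - v j‖ ^ 2 else 0) >
      (ks / 4) * (∑ i : Fin 12, ∑ j : Fin 12,
        if G.Adj i j then ‖u i - u j‖ ^ 2 else 0) +
      (ks / 2) * ∑ i : Fin 12, ∑ j : Fin 12,
        (if G.Adj i j then ⟪u i - u j, (v i - v j) - (u i - u j)⟫ else 0) := by
  set w : Fin 12 → EuclideanSpace ℝ (Fin 3) := fun i => v i - u i with hw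
  have hkey : ∀ i j : Fin 12, (if G.Adj i j then ‖v i - v j‖ ^ 2 else 0) =
      (if G.Adj i j then ‖u i - u j‖ ^ 2 else 0)
      + 2 * (if G.Adj i j then ⟪u i - u j, (v i - v j) - (u i - u j)⟫ else 0)
      + (if G.Adj i j then ‖w i - w j‖ ^ 2 else 0) := by
    intro i j
    by_cases h : G.Adj i j
    · simp only [h, if_true]
      have h2 : w i - w j = (v i - v j) - (u i - u j) := by simp only [hw]; abel
      have key := norm_add_sq_real (u i - u j) ((v i - v j) - (u i - u j))
      have h1 : (u i - u j) + ((v i - v j) - (u i - u j)) = v i - v j := by abel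
      rw [h1] at key
      rw [h2, key]
    · simp [h]
  have hsum : ∑ i : Fin 12, ∑ j : Fin 12, (if G.Adj i j then ‖v i - v j‖ ^ 2 else 0) =
      (∑ i : Fin 12, ∑ j : Fin 12, if G.Adj i j then ‖u i - u j‖ ^ 2 else 0)
      + 2 * (∑ i : Fin 12, ∑ j : Fin 12,
          if G.Adj i j then ⟪u i - u j, (v i - v j) - (u i - u j)⟫ else 0)
      + (∑ i : Fin 12, ∑ j : Fin 12, if G.Adj i j then ‖w i - w j‖ ^ 2 else 0) := by
    simp_rw [hkey, Finset.sum_add_distrib, Finset.mul_sum]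
  -- find an edge with w a ≠ w b
  have hw0 : w 0 = 0 := by simp [hw, hu0, hv0]
  obtain ⟨i, hi⟩ : ∃ i, w i ≠ 0 := by
    by_contra hcon
    push_neg at hcon
    apply huv
    funext i
    have := hcon i
    simp only [hw, sub_eq_zero] at this
    exact this.symm
  obtain ⟨a, b, hab, hwab⟩ :=
    exists_adj_ne w ((hG 0 i).some) (by rw [hw0]; exact fun h => hi h.symm)
  have hC : 0 < ∑ i : Fin 12, ∑ j : Fin 12, (if G.Adj i j then ‖w i - w j‖ ^ 2 else 0) := by
    apply Finset.sum_pos'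
    · intro i _
      apply Finset.sum_nonneg
      intro j _
      split <;> positivity
    · refine ⟨a, Finset.mem_univ a, ?_⟩
      apply Finset.sum_pos'
      · intro j _; split <;> positivity
      · refine ⟨b, Finset.mem_univ b, ?_⟩
        simp only [hab, if_true]
        exact pow_pos (norm_pos_iff.mpr (sub_ne_zero_of_ne hwab)) 2
  rw [hsum]
  nlinarith [hC, hks]
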